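/- A permutation π of [m] has no increasing subsequence of length greater than d if and only if the insertion tableau P(π) produced by the RSK algorithm has at most d columns. -/

import Mathlib

/-- Row-insert `x` into a single row: either append at the end, or bump the
smallest entry greater than `x`. Returns the new row and the bumped value. -/
def insertInRow (row : List ℕ) (x : ℕ) : List ℕ × Option ℕ :=
  match row.findIdx? (fun y => decide (x < y)) with
  | none => (row ++ [x], none)
  | some i => (row.set i x, row[i]?)

/-- RSK row-insertion (bumping) of `x` into a tableau given as its list of rows. -/
def rowInsertT : List (List ℕ) → ℕ → List (List ℕ)
  | [], x => [[x]]
  | r :: rs, x =>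
    match insertInRow r x with
    | (r', none) => r' :: rs
    | (r', some y) => r' :: rowInsertT rs y

/-- The shape of a tableau: the list of its row lengths. -/
def shapeT (T : List (List ℕ)) : List ℕ := T.map List.length

/-- The number of columns of a tableau: the length of its first row. -/
def numCols (T : List (List ℕ)) : ℕ := (T.getD 0 []).length

/-- The insertion tableau `P` of a word, built by successive row-insertions. -/
def rskP (l : List ℕ) : List (List ℕ) := l.foldl rowInsertT []

/-- Simple recursive version of the first component of `insertInRow`. -/
def insRow : List ℕ → ℕ → List ℕ
  | [], x => [x]
  | y :: ys, x => if x < y then x :: ys else y :: insRow ys x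

lemma insertInRow_fst (r : List ℕ) (x : ℕ) : (insertInRow r x).1 = insRow r x := by
  induction r with
  | nil => rfl
  | cons y ys ih =>
    have hd : (y :: ys).findIdx? (fun y => decide (x < y)) =
        if x < y then some 0 else (ys.findIdx? (fun y => decide (x < y))).map (· + 1) := by
      rw [List.findIdx?_cons]
      by_cases h : x < y <;> simp [h]
    by_cases h : x < y
    · simp [insertInRow, hd, h, insRow]
    · cases hf : ys.findIdx? (fun y => decide (x < y)) with
      | none =>
        have h2 : insRow ys x = ys ++ [x] := by
          rw [← ih]; simp [insertInRow, hf]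
        simp [insertInRow, hd, h, hf, insRow, h2]
      | some i =>
        have h2 : insRow ys x = ys.set i x := by
          rw [← ih]; simp [insertInRow, hf]
        simp [insertInRow, hd, h, hf, insRow, h2]

lemma insRow_spec (r : List ℕ) (x : ℕ) : ∃ q, q ≤ r.length ∧
    (insRow r x).getD q 0 = x ∧
    (∀ p, p ≠ q → (insRow r x).getD p 0 = r.getD p 0) ∧
    (q = 0 ∨ r.getD (q - 1) 0 ≤ x) ∧
    (insRow r x).length = (if q = r.length then r.length + 1 else r.length) ∧
    (q < r.length → x < r.getD q 0) := by
  induction r with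
  | nil =>
    refine ⟨0, by simp [insRow], by simp [insRow], ?_, Or.inl rfl, by simp [insRow], by simp⟩
    intro p hp
    cases p with
    | zero => exact absurd rfl hp
    | succ n => simp [insRow]
  | cons y ys ih =>
    by_cases h : x < y
    · refine ⟨0, by simp, ?_, ?_, Or.inl rfl, ?_, ?_⟩
      · simp [insRow, h]
      · intro p hp
        cases p with
        | zero => exact absurd rfl hp
        | succ n => simp [insRow, h]
      · simp [insRow, h]
      · intro _; simpa using h
    · obtain ⟨q, hq, hat, hoff, hprev, hlen, hdec⟩ := ih
      refine ⟨q + 1, by simpa using hq, ?_, ?_, ?_, ?_, ?_⟩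
      · simpa [insRow, h] using hat
      · intro p hp
        cases p with
        | zero => simp [insRow, h]
        | succ n => simpa [insRow, h] using hoff n (by omega)
      · right
        cases q with
        | zero => simpa using not_lt.mp h
        | succ q' =>
          rcases hprev with h0 | hle
          · omega
          · simpa using hle
      · simp only [insRow, if_neg h, List.length_cons, hlen]
        by_cases hqe : q = ys.length <;> simp [hqe]
      · intro hlt
        have := hdec (by simpa using hlt)
        simpa using this

lemma insRow_sorted {r : List ℕ} (x : ℕ) (hr : r.Chain' (· ≤ ·)) :
    (insRow r x).Chain' (· ≤ ·) := by
  induction r with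
  | nil => simp [insRow, List.Chain']
  | cons y ys ih =>
    by_cases h : x < y
    · rw [insRow, if_pos h]
      cases ys with
      | nil => simp [List.Chain']
      | cons z zs =>
        exact List.isChain_cons_cons.mpr ⟨le_of_lt (lt_of_lt_of_le h (List.isChain_cons_cons.mp hr).1),
          (List.isChain_cons_cons.mp hr).2⟩
    · rw [insRow, if_neg h]
      refine List.isChain_cons.mpr ⟨?_, ih hr.tail⟩
      intro b hb
      cases ys with
      | nil => simp [insRow] at hb; omega
      | cons z zs =>
        rw [insRow] at hb
        by_cases h2 : x < z
        · simp [h2] at hb; omega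
        · simp [h2] at hb
          exact hb ▸ (List.isChain_cons_cons.mp hr).1

lemma sorted_getD_mono {r : List ℕ} (hr : r.Chain' (· ≤ ·)) {i j : ℕ} (hij : i ≤ j)
    (hj : j < r.length) : r.getD i 0 ≤ r.getD j 0 := by
  rcases eq_or_lt_of_le hij with rfl | hlt
  · exact le_refl _
  · have hp := (List.isChain_iff_pairwise).mp hr
    have hi : i < r.length := lt_trans hlt hj
    have := List.pairwise_iff_getElem.mp hp i j hi hj hlt
    rwa [List.getD_eq_getElem?_getD, List.getD_eq_getElem?_getD,
      List.getElem?_eq_getElem hi, List.getElem?_eq_getElem hj]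

/-- The first row of the insertion tableau, computed directly. -/
def frow (l : List ℕ) : List ℕ := l.foldl insRow []

lemma frow_sorted (l : List ℕ) : (frow l).Chain' (· ≤ ·) := by
  suffices h : ∀ r, r.Chain' (· ≤ ·) → (l.foldl insRow r).Chain' (· ≤ ·) by
    exact h [] (by simp [List.Chain'])
  induction l with
  | nil => intro r hr; exact hr
  | cons a l ih => intro r hr; exact ih _ (insRow_sorted a hr)

lemma getD0_rowInsertT (T : List (List ℕ)) (x : ℕ) :
    (rowInsertT T x).getD 0 [] = insRow (T.getD 0 []) x := by
  cases T with
  | nil => simp [rowInsertT, insRow]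
  | cons r rs =>
    rcases hi : insertInRow r x with ⟨r', o⟩
    have hr' : r' = insRow r x := by rw [← insertInRow_fst, hi]
    cases o <;> simp [rowInsertT, hi, hr']

lemma rskP_getD0 (l : List ℕ) : (rskP l).getD 0 [] = frow l := by
  suffices h : ∀ T : List (List ℕ), ((List.foldl rowInsertT T l).getD 0 []) =
      List.foldl insRow (T.getD 0 []) l by
    exact h []
  induction l with
  | nil => intro T; rfl
  | cons a l ih =>
    intro T
    rw [List.foldl_cons, List.foldl_cons, ih, getD0_rowInsertT]

/-- The index of the row in which row-inserting `x` into `T` creates a new box. -/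
def newBoxRow (T : List (List ℕ)) (x : ℕ) : ℕ :=
  (List.range (rowInsertT T x).length).findIdx
    (fun i => decide ((T.getD i []).length < ((rowInsertT T x).getD i []).length))

/-- The (row, column) position (0-indexed) of the new box created by
row-inserting `x` into `T`. -/
def newBox (T : List (List ℕ)) (x : ℕ) : ℕ × ℕ :=
  (newBoxRow T x, ((rowInsertT T x).getD (newBoxRow T x) []).length - 1)

/-- One step of the full RSK algorithm on the pair `(P, Q)`: insert the value
`xi.1` into `P` and record the label `xi.2` in `Q` at the newly created box. -/
def rskStep (PQ : List (List ℕ) × List (List ℕ)) (xi : ℕ × ℕ) :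
    List (List ℕ) × List (List ℕ) :=
  let r := newBoxRow PQ.1 xi.1
  (rowInsertT PQ.1 xi.1,
    if r < PQ.2.length then PQ.2.set r (PQ.2.getD r [] ++ [xi.2]) else PQ.2 ++ [[xi.2]])

/-- The RSK pair `(P, Q)` of a word (the `i`-th letter gets recording label `i`). -/
def rskPQ (l : List ℕ) : List (List ℕ) × List (List ℕ) :=
  (l.zip (List.range' 1 l.length)).foldl rskStep ([], [])

/-- `T` is a standard Young tableau with entries `{1, …, m}`, given as its list of
rows: no empty rows, weakly decreasing row lengths, rows strictly increasing left
to right, columns strictly increasing top to bottom, and the entries are exactly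
`1, …, m`. -/
def isSYT (m : ℕ) (T : List (List ℕ)) : Prop :=
  [] ∉ T ∧
  List.Chain' (fun a b => b.length ≤ a.length) T ∧
  (∀ r ∈ T, List.Chain' (· < ·) r) ∧
  (∀ i j : ℕ, j < (T.getD (i + 1) []).length →
      (T.getD i []).getD j 0 < (T.getD (i + 1) []).getD j 0) ∧
  T.flatten.Perm (List.range' 1 m)

lemma getD_append_last (s : List ℕ) (x : ℕ) : (s ++ [x]).getD s.length 0 = x := by
  rw [List.getD_eq_getElem?_getD, List.getElem?_append_right (le_refl _)]
  simp

lemma getLast?_eq_getD {s : List ℕ} (h : s ≠ []) :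
    s.getLast? = some (s.getD (s.length - 1) 0) := by
  have hl : s.length - 1 < s.length := by
    have := List.length_pos_iff.mpr h; omega
  rw [List.getLast?_eq_getElem?, List.getElem?_eq_getElem hl,
    List.getD_eq_getElem?_getD, List.getElem?_eq_getElem hl]
  rfl

lemma insRow_length_ge (r : List ℕ) (x : ℕ) : r.length ≤ (insRow r x).length := by
  obtain ⟨q, hq, -, -, -, hlen, -⟩ := insRow_spec r x
  rw [hlen]; split <;> omega

lemma frow_concat (u : List ℕ) (x : ℕ) : frow (u ++ [x]) = insRow (frow u) x := by
  simp [frow, List.foldl_concat]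

lemma chain_le_frow : ∀ (w s : List ℕ), s.Sublist w → s.Chain' (· ≤ ·) → s ≠ [] →
    s.length ≤ (frow w).length ∧ (frow w).getD (s.length - 1) 0 ≤ s.getD (s.length - 1) 0 := by
  intro w
  induction w using List.reverseRecOn with
  | nil =>
    intro s hs _ hne
    exact absurd (List.sublist_nil.mp hs) hne
  | append_singleton u x ih =>
    intro s hs hchain hne
    rw [frow_concat]
    obtain ⟨q, hq, hat, hoff, hprev, hlen, hdec⟩ := insRow_spec (frow u) x
    have hsort := frow_sorted u
    have hlenge := insRow_length_ge (frow u) x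
    rcases List.sublist_append_iff.mp hs with ⟨s₁, s₂, rfl, h₁, h₂⟩
    rcases List.sublist_singleton.mp h₂ with rfl | rfl
    · -- s = s₁, a sublist of u
      rw [List.append_nil] at hchain hne ⊢
      obtain ⟨hA, hB⟩ := ih s₁ h₁ hchain hne
      have hk : s₁.length - 1 < (frow u).length := by
        have := List.length_pos_iff.mpr hne; omega
      refine ⟨le_trans hA hlenge, ?_⟩
      by_cases hkq : s₁.length - 1 = q
      · rw [hkq, hat]
        exact le_trans (le_of_lt (hdec (hkq ▸ hk))) (hkq ▸ hB)
      · rw [hoff _ hkq]; exact hB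
    · -- s = s₁ ++ [x]
      rcases List.isChain_append.mp hchain with ⟨hc₁, -, hlast⟩
      have hslen : (s₁ ++ [x]).length = s₁.length + 1 := by simp
      have hgoal2 : (s₁ ++ [x]).getD ((s₁ ++ [x]).length - 1) 0 = x := by
        rw [hslen]; simpa using getD_append_last s₁ x
      rcases eq_or_ne s₁ [] with rfl | hs₁ne
      · -- s = [x]
        refine ⟨?_, ?_⟩
        · have h1 : (1:ℕ) ≤ (insRow (frow u) x).length := by rw [hlen]; split <;> omega
          simpa using h1
        · have hg : (([] : List ℕ) ++ [x]).length - 1 = 0 := by simp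
          rw [hg]
          have hx : (([] : List ℕ) ++ [x]).getD 0 0 = x := by simp
          rw [hx]
          rcases Nat.eq_zero_or_pos q with rfl | hq0
          · rw [hat]
          · rw [hoff 0 (by omega)]
            rcases hprev with h0 | hle
            · omega
            · exact le_trans (sorted_getD_mono hsort (by omega) (by omega)) hle
      · obtain ⟨hA, hB⟩ := ih s₁ h₁ hc₁ hs₁ne
        have hlx : s₁.getD (s₁.length - 1) 0 ≤ x := by
          have := hlast _ (by rw [getLast?_eq_getD hs₁ne]; rfl) x (by rfl)
          exact this
        have hk1 : s₁.length - 1 < (frow u).length := by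
          have := List.length_pos_iff.mpr hs₁ne; omega
        set k := s₁.length with hkdef
        have hkpos : 0 < k := List.length_pos_iff.mpr hs₁ne
        -- k ≤ q
        have hkq : k ≤ q := by
          by_contra hgt
          push_neg at hgt
          have hqlt : q < (frow u).length := by omega
          have h1 : x < (frow u).getD q 0 := hdec hqlt
          have h2 : (frow u).getD q 0 ≤ (frow u).getD (k - 1) 0 :=
            sorted_getD_mono hsort (by omega) hk1
          omega
        have hgx : (s₁ ++ [x]).getD k 0 = x := by
          rw [hkdef]; exact getD_append_last s₁ x
        rw [hslen, Nat.add_sub_cancel, hgx]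
        rcases eq_or_lt_of_le hkq with rfl | hklt
        · refine ⟨?_, by rw [hat]⟩
          rw [hlen]; split <;> omega
        · constructor
          · rw [hlen]; split <;> omega
          · rw [hoff k (by omega)]
            rcases hprev with h0 | hle
            · omega
            · calc (frow u).getD k 0 ≤ (frow u).getD (q - 1) 0 :=
                    sorted_getD_mono hsort (by omega) (by omega)
                _ ≤ x := hle

lemma exists_chain_frow : ∀ (w : List ℕ) (p : ℕ), p < (frow w).length →
    ∃ s : List ℕ, s.Sublist w ∧ s.Chain' (· ≤ ·) ∧ s.length = p + 1 ∧
      s.getD p 0 ≤ (frow w).getD p 0 := by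
  intro w
  induction w using List.reverseRecOn with
  | nil => intro p hp; simp [frow] at hp
  | append_singleton u x ih =>
    intro p hp
    rw [frow_concat] at hp ⊢
    obtain ⟨q, hq, hat, hoff, hprev, hlen, hdec⟩ := insRow_spec (frow u) x
    have hsort := frow_sorted u
    by_cases hpq : p = q
    · subst hpq
      rcases Nat.eq_zero_or_pos p with rfl | hp0
      · refine ⟨[x], ?_, by simp [List.Chain'], by simp, by rw [hat]; simp⟩
        simpa using (List.nil_sublist u).append (List.Sublist.refl [x])
      · have hq1 : p - 1 < (frow u).length := by omega
        obtain ⟨s', hsub', hchain', hlen', hval'⟩ := ih (p - 1) hq1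
        have hs'len : s'.length = p := by omega
        have hs'ne : s' ≠ [] := by
          intro hnil; rw [hnil] at hlen'; simp only [List.length_nil] at hlen'; omega
        have hle : s'.getD (p - 1) 0 ≤ x := by
          rcases hprev with h0 | hle
          · omega
          · exact le_trans hval' hle
        refine ⟨s' ++ [x], hsub'.append (List.Sublist.refl [x]), ?_, by simp [hs'len], ?_⟩
        · refine List.isChain_append.mpr ⟨hchain', by simp [List.Chain'], ?_⟩
          intro a ha b hb
          rw [List.head?_cons, Option.mem_some_iff] at hb
          rw [getLast?_eq_getD hs'ne, Option.mem_some_iff] at ha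
          subst hb; subst ha
          rw [hs'len]
          exact hle
        · rw [← hs'len, getD_append_last, hs'len, hat]
    · have hplen : p < (frow u).length := by
        rw [hlen] at hp; split at hp <;> omega
      obtain ⟨s, hsub, hchain, hslen, hval⟩ := ih p hplen
      exact ⟨s, hsub.trans (List.sublist_append_left u [x]), hchain, hslen,
        by rw [hoff p hpq]; exact hval⟩

/-- The one-line word of a permutation of `Fin m`, with values in `{1, …, m}`. -/
def permList {m : ℕ} (π : Equiv.Perm (Fin m)) : List ℕ :=
  (List.finRange m).map (fun i => (π i : ℕ) + 1)

/-- A permutation `π` of `[m]` has no increasing subsequence of length greater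
than `d` if and only if its RSK insertion tableau `P(π)` has at most `d` columns. -/
theorem no_long_increasing_iff_rskP_cols_le (m d : ℕ) (π : Equiv.Perm (Fin m)) :
    (∀ (L : ℕ) (t : Fin L → Fin m), StrictMono t →
        StrictMono (fun j => π (t j)) → L ≤ d) ↔
    numCols (rskP (permList π)) ≤ d := by
  have hw : permList π = (List.finRange m).map (fun i => (π i : ℕ) + 1) := rfl
  have hnum : numCols (rskP (permList π)) = (frow (permList π)).length := by
    simp only [numCols, rskP_getD0]
  rw [hnum]
  constructor
  · intro H
    rcases Nat.eq_zero_or_pos (frow (permList π)).length with h0 | h0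
    · omega
    · obtain ⟨s, hsub, hchain, hslen, -⟩ :=
        exists_chain_frow (permList π) ((frow (permList π)).length - 1) (by omega)
      have hslen' : s.length = (frow (permList π)).length := by omega
      have hginj : Function.Injective (fun i : Fin m => (π i : ℕ) + 1) := by
        intro a b hab
        have hv : (π a : ℕ) = (π b : ℕ) := by simpa using hab
        exact π.injective (Fin.val_injective hv)
      have hwnodup : (permList π).Nodup := by
        rw [hw]; exact (List.nodup_finRange m).map hginj
      have hsnodup : s.Nodup := hsub.nodup hwnodup
      have hpw : s.Pairwise (· < ·) := by
        have h1 : s.Pairwise (· ≤ ·) := List.isChain_iff_pairwise.mp hchain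
        exact (h1.and hsnodup).imp (fun h => lt_of_le_of_ne h.1 h.2)
      rw [hw] at hsub
      obtain ⟨I, hIsub, hsI⟩ := List.sublist_map_iff.mp hsub
      have hIpw : I.Pairwise (· < ·) := (List.pairwise_lt_finRange m).sublist hIsub
      subst hsI
      have hIlen : I.length = (I.map (fun i : Fin m => (π i : ℕ) + 1)).length := by simp
      have hLd : (I.map (fun i : Fin m => (π i : ℕ) + 1)).length ≤ d := by
        refine H _ (fun j => I.get (Fin.cast hIlen.symm j)) ?_ ?_
        · intro a b hab
          have h2 := List.pairwise_iff_getElem.mp hIpw a.val b.val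
            ((Fin.cast hIlen.symm a).isLt) ((Fin.cast hIlen.symm b).isLt) hab
          exact h2
        · intro a b hab
          have h2 := List.pairwise_iff_getElem.mp hpw a.val b.val a.isLt b.isLt hab
          rw [List.getElem_map, List.getElem_map] at h2
          have h3 : (π I[(a : ℕ)] : ℕ) < (π I[(b : ℕ)] : ℕ) := by omega
          exact Fin.lt_def.mpr h3
      omega
  · intro hcols L t ht hπt
    rcases Nat.eq_zero_or_pos L with rfl | hL0
    · omega
    · have hIpw : ((List.finRange L).map t).Pairwise (· < ·) := by
        rw [List.pairwise_map]
        exact (List.pairwise_lt_finRange L).imp (fun h => ht h)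
      have hIsub : ((List.finRange L).map t).Sublist (List.finRange m) := by
        refine List.sublist_of_subperm_of_pairwise (r := (· ≤ ·)) ?_ (hIpw.imp le_of_lt)
          ((List.pairwise_lt_finRange m).imp le_of_lt)
        exact List.subperm_of_subset (hIpw.imp ne_of_lt)
          (fun a _ => List.mem_finRange a)
      set s : List ℕ := ((List.finRange L).map t).map (fun i : Fin m => (π i : ℕ) + 1)
        with hs2
      have hslen : s.length = L := by simp [hs2]
      have hspw : s.Pairwise (· < ·) := by
        rw [hs2, List.pairwise_map, List.pairwise_map]
        refine (List.pairwise_lt_finRange L).imp ?_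
        intro a b hab
        have h2 : (π (t a) : ℕ) < (π (t b) : ℕ) := Fin.lt_def.mp (hπt hab)
        omega
      have hsub : s.Sublist (permList π) := by
        rw [hw, hs2]
        exact hIsub.map _
      have hne : s ≠ [] := by
        intro h; rw [h] at hslen; simp at hslen; omega
      have hmain := (chain_le_frow (permList π) s hsub
        (List.isChain_iff_pairwise.mpr (hspw.imp le_of_lt)) hne).1
      omega
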